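/- Let p be in A_h (i.e. Σ_v |p^v| h_T(v) < ∞) and q an element of the extended tensor algebra over ℝ^d with q^∅ = 0, such that q is dominated (coefficient-wise in absolute value) by a⊗exp^{⧢}(b) or by exp^{⧢}(b)⊗a for some linear combinations of single letters a and b. Then the resolvent (∅-q)^{-1} is well-defined and lies in A_h, and the unique solution ℓ = p⊗(∅-q)^{-1} of ℓ = p + ℓ⊗q lies in A_h. -/

import Mathlib

open scoped BigOperators

/-- Words over the alphabet `Fin d`. -/
abbrev Word (d : ℕ) := List (Fin d)

/-- The extended tensor algebra over `ℝ^d`, viewed as coefficient functions on words. -/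
abbrev ETA (d : ℕ) := Word d → ℝ

namespace ETA

variable {d : ℕ}

/-- The unit (empty word) element `∅`. -/
noncomputable def unit (d : ℕ) : ETA d := fun v => if v = [] then 1 else 0

/-- Concatenation (tensor) product. -/
noncomputable def concat (p q : ETA d) : ETA d :=
  fun v => ∑ k ∈ Finset.range (v.length + 1), p (v.take k) * q (v.drop k)

/-- Concatenation powers. -/
noncomputable def cpow (p : ETA d) : ℕ → ETA d
  | 0 => unit d
  | n + 1 => concat (cpow p n) p

/-- Shuffle product of two words as a multiset of words. -/
def shuffleW {A : Type*} : List A → List A → Multiset (List A)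
  | [], w => {w}
  | u, [] => {u}
  | a :: u, b :: w =>
      (shuffleW u (b :: w)).map (a :: ·) + (shuffleW (a :: u) w).map (b :: ·)
  termination_by u w => u.length + w.length
  decreasing_by all_goals (simp only [List.length_cons]; omega)

/-- The finset of all words of length `n` over `Fin d`. -/
noncomputable def wordsLen (d n : ℕ) : Finset (Word d) :=
  Finset.image (fun f : Fin n → Fin d => List.ofFn f) Finset.univ

/-- Shuffle product on the extended tensor algebra (coefficient-wise finite sums). -/
noncomputable def shuffle (p q : ETA d) : ETA d :=
  fun v => ∑ k ∈ Finset.range (v.length + 1),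
    ∑ u ∈ wordsLen d k, ∑ w ∈ wordsLen d (v.length - k),
      p u * q w * ((shuffleW u w).count v : ℝ)

/-- Shuffle powers. -/
noncomputable def spow (p : ETA d) : ℕ → ETA d
  | 0 => unit d
  | n + 1 => shuffle (spow p n) p

/-- A linear combination of single letters `Σ_i c i • e_i`. -/
def letters (c : Fin d → ℝ) : ETA d := fun v =>
  match v with
  | [i] => c i
  | _ => 0

/-- A single letter `e_i`. -/
noncomputable def letter (i : Fin d) : ETA d := fun v => if v = [i] then 1 else 0

/-- The resolvent `(∅ - q)⁻¹ = Σ_n q^{⊗n}`, defined coefficient-wise. -/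
noncomputable def res (q : ETA d) : ETA d := fun v => ∑' n, cpow q n v

/-- The shuffle exponential `exp^⧢(b) = Σ_n b^{⧢n}/n!`, defined coefficient-wise. -/
noncomputable def shuexp (b : ETA d) : ETA d := fun v => ∑' n, spow b n v / (Nat.factorial n : ℝ)

/-- Right projection `ℓ|_i`, removing a terminal letter `i`. -/
def proj (p : ETA d) (i : Fin d) : ETA d := fun v => p (v ++ [i])

end ETA

/-- The dominating function `h_t(v) = C (n+1)^{-1/4} (2t)^{(n+x)/2} / √((n+x-1)!)`,
where `n` is the length of `v` and `x` the number of occurrences of the distinguished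
letter `0` (the time letter), with the convention `m! = 1` for `m ≤ 0`. -/
noncomputable def hfun {d : ℕ} [NeZero d] (C t : ℝ) (v : Word d) : ℝ :=
  C * ((v.length : ℝ) + 1) ^ (-(1/4 : ℝ)) *
    (2 * t) ^ (((v.length + v.count 0 : ℕ) : ℝ) / 2) /
      Real.sqrt (Nat.factorial (v.length + v.count 0 - 1))



namespace ETA

variable {d : ℕ}

-- ### aux lemmas
theorem mem_wordsLen {u : Word d} {n : ℕ} : u ∈ wordsLen d n ↔ u.length = n := by
  constructor
  · rintro h
    simp only [wordsLen, Finset.mem_image] at h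
    obtain ⟨f, -, rfl⟩ := h
    simp
  · rintro rfl
    simp only [wordsLen, Finset.mem_image]
    exact ⟨u.get, Finset.mem_univ _, List.ofFn_get u⟩

theorem shuffleW_nil_left {A : Type*} (w : List A) : shuffleW [] w = {w} := by
  cases w <;> simp [shuffleW]

theorem shuffleW_nil_right {A : Type*} (u : List A) : shuffleW u [] = {u} := by
  cases u <;> simp [shuffleW]

theorem shuffleW_cons_cons {A : Type*} (a b : A) (u w : List A) :
    shuffleW (a :: u) (b :: w)
      = (shuffleW u (b :: w)).map (a :: ·) + (shuffleW (a :: u) w).map (b :: ·) := by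
  simp [shuffleW]

theorem length_of_mem_shuffleW {A : Type*} :
    ∀ (u w x : List A), x ∈ shuffleW u w → x.length = u.length + w.length := by
  intro u w
  induction u, w using shuffleW.induct with
  | case1 w => intro x hx; simp [shuffleW_nil_left] at hx; simp [hx]
  | case2 u => intro x hx; rw [shuffleW_nil_right] at hx; simp_all
  | case3 a u b w ih1 ih2 =>
    intro x hx
    rw [shuffleW_cons_cons, Multiset.mem_add] at hx
    rcases hx with hx | hx <;> rw [Multiset.mem_map] at hx <;>
      obtain ⟨y, hy, rfl⟩ := hx
    · have := ih1 y hy; simp [this]; omega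
    · have := ih2 y hy; simp [this]; omega


section NZ
variable [NeZero d]
theorem wordsLen_zero : wordsLen d 0 = {[]} := by
  ext u; simp [mem_wordsLen, List.length_eq_zero_iff]

theorem sum_wordsLen_succ {M : Type*} [AddCommMonoid M] (n : ℕ) (f : Word d → M) :
    ∑ u ∈ wordsLen d (n+1), f u = ∑ a : Fin d, ∑ u ∈ wordsLen d n, f (a :: u) := by
  haveI : Inhabited (Fin d) := ⟨⟨0, Nat.pos_of_ne_zero (NeZero.ne d)⟩⟩
  rw [← Finset.sum_product']
  refine Finset.sum_nbij' (fun u => (u.headI, u.tail)) (fun p => p.1 :: p.2) ?_ ?_ ?_ ?_ ?_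
  · intro u hu
    rw [mem_wordsLen] at hu
    cases u with
    | nil => simp at hu
    | cons a u => simp_all [mem_wordsLen]
  · intro p hp
    simp only [Finset.mem_product, mem_wordsLen] at hp ⊢
    simp [hp.2]
  · intro u hu
    rw [mem_wordsLen] at hu
    cases u with
    | nil => simp at hu
    | cons a u => rfl
  · intro p hp; rfl
  · intro u hu
    rw [mem_wordsLen] at hu
    cases u with
    | nil => simp at hu
    | cons a u => rfl
theorem count_map_cons {A : Type*} [DecidableEq A] (m : Multiset (List A)) (a c : A) (v : List A) :
    ((m.map (a :: ·)).count (c :: v)) = if a = c then m.count v else 0 := by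
  split_ifs with h
  · subst h
    exact Multiset.count_map_eq_count' _ m (fun x y hxy => by simpa using hxy) v
  · rw [Multiset.count_eq_zero]
    intro hmem
    rw [Multiset.mem_map] at hmem
    obtain ⟨y, -, hy⟩ := hmem
    exact h (by injection hy)

theorem count_shuffleW_eq_zero {A : Type*} [DecidableEq A] {u w v : List A}
    (h : v.length ≠ u.length + w.length) : (shuffleW u w).count v = 0 := by
  rw [Multiset.count_eq_zero]
  exact fun hm => h (length_of_mem_shuffleW u w v hm)


theorem sum_sum_ite_cons (v : Word d) (n : ℕ) :
    (∑ a : Fin d, ∑ u ∈ wordsLen d n, if v = a :: u then 1 else 0) ≤ 1 := by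
  cases v with
  | nil => simp
  | cons e v2 =>
    have hin : ∀ a : Fin d, (∑ u ∈ wordsLen d n, if e :: v2 = a :: u then (1:ℕ) else 0)
        ≤ if a = e then 1 else 0 := by
      intro a
      by_cases ha : a = e
      · subst ha
        rw [if_pos rfl]
        have h1 : ∀ u ∈ wordsLen d n,
            (if a :: v2 = a :: u then (1:ℕ) else 0) = if u = v2 then 1 else 0 := by
          intro u _
          by_cases h : u = v2
          · simp [h]
          · have h2 : ¬ v2 = u := fun hh => h hh.symm
            simp [h, h2]
        rw [Finset.sum_congr rfl h1, Finset.sum_ite_eq' (wordsLen d n) v2]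
        split_ifs <;> simp
      · rw [if_neg ha]
        refine le_of_eq (Finset.sum_eq_zero fun u _ => ?_)
        exact if_neg fun h => ha (by injection h with h1 _; exact h1.symm)
    calc (∑ a : Fin d, ∑ u ∈ wordsLen d n, if e :: v2 = a :: u then (1:ℕ) else 0)
        ≤ ∑ a : Fin d, if a = e then 1 else 0 := Finset.sum_le_sum (fun a _ => hin a)
      _ = 1 := by simp

/-- Key single-letter shuffle count bound. -/
theorem sum_count_shuffleW_single (j : Fin d) :
    ∀ (v : Word d) (n : ℕ),
      ∑ u ∈ wordsLen d n, (shuffleW u [j]).count v ≤ n + 1 := by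
  intro v
  induction v with
  | nil =>
    intro n
    have : ∀ u ∈ wordsLen d n, (shuffleW u [j]).count ([] : Word d) = 0 := by
      intro u hu
      exact count_shuffleW_eq_zero (by simp)
    rw [Finset.sum_congr rfl this]
    simp
  | cons c v ih =>
    intro n
    cases n with
    | zero =>
      simp only [wordsLen_zero, Finset.sum_singleton, shuffleW_nil_left]
      rw [Multiset.count_singleton]
      split_ifs <;> simp
    | succ n =>
      rw [sum_wordsLen_succ]
      have hterm : ∀ a : Fin d, ∀ u ∈ wordsLen d n,
          (shuffleW (a :: u) [j]).count (c :: v)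
            = (if a = c then (shuffleW u [j]).count v else 0)
              + (if c :: v = j :: a :: u then 1 else 0) := by
        intro a u _
        rw [shuffleW_cons_cons, Multiset.count_add, count_map_cons]
        congr 1
        rw [shuffleW_nil_right, Multiset.map_singleton, Multiset.count_singleton]
      calc ∑ a : Fin d, ∑ u ∈ wordsLen d n, (shuffleW (a :: u) [j]).count (c :: v)
          = (∑ a : Fin d, ∑ u ∈ wordsLen d n,
              if a = c then (shuffleW u [j]).count v else 0)
            + ∑ a : Fin d, ∑ u ∈ wordsLen d n,
              (if c :: v = j :: a :: u then 1 else 0) := by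
            rw [← Finset.sum_add_distrib]
            refine Finset.sum_congr rfl fun a _ => ?_
            rw [← Finset.sum_add_distrib]
            exact Finset.sum_congr rfl (hterm a)
        _ ≤ (n + 1) + 1 := by
            gcongr
            · calc ∑ a : Fin d, ∑ u ∈ wordsLen d n,
                  (if a = c then (shuffleW u [j]).count v else 0)
                  = ∑ u ∈ wordsLen d n, (shuffleW u [j]).count v := by
                    rw [Finset.sum_comm]
                    refine Finset.sum_congr rfl fun u _ => ?_
                    simp
                _ ≤ n + 1 := ih n
            · -- at most one (a,u) matches
              calc ∑ a : Fin d, ∑ u ∈ wordsLen d n, (if c :: v = j :: a :: u then 1 else 0)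
                  ≤ ∑ a : Fin d, ∑ u ∈ wordsLen d n,
                      (if v = a :: u then 1 else 0) := by
                    gcongr with a _ u _
                    split_ifs with h1 h2
                    · exact le_rfl
                    · exfalso
                      injection h1 with hcj htail
                      exact h2 htail
                    · exact Nat.zero_le _
                    · exact le_rfl
                _ ≤ 1 := sum_sum_ite_cons v n
variable (b : Fin d → ℝ)

theorem letters_eq_zero {v : Word d} (h : v.length ≠ 1) : letters b v = 0 := by
  match v with
  | [] => rfl
  | [i] => simp at h
  | x :: y :: t => rfl

theorem abs_letters_le (v : Word d) : |letters b v| ≤ ∑ i : Fin d, |b i| := by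
  match v with
  | [] => simpa [letters] using Finset.sum_nonneg (fun i _ => abs_nonneg (b i))
  | [i] =>
      exact Finset.single_le_sum (f := fun i => |b i|) (fun i _ => abs_nonneg _) (Finset.mem_univ i)
  | x :: y :: t => simpa [letters] using Finset.sum_nonneg (fun i _ => abs_nonneg (b i))

theorem spow_eq_zero : ∀ (n : ℕ) (v : Word d), v.length ≠ n → spow (letters b) n v = 0 := by
  intro n
  induction n with
  | zero => intro v hv; simp only [spow, unit]; rw [if_neg]; simpa [List.length_eq_zero_iff] using hv
  | succ n ih =>
    intro v hv
    rw [spow, shuffle]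
    refine Finset.sum_eq_zero fun k hk => ?_
    refine Finset.sum_eq_zero fun u hu => ?_
    refine Finset.sum_eq_zero fun w hw => ?_
    rw [mem_wordsLen] at hu hw
    rw [Finset.mem_range] at hk
    by_cases hun : u.length = n
    · by_cases hw1 : w.length = 1
      · -- then count is zero since v.length ≠ n + 1
        rw [count_shuffleW_eq_zero (by omega)]
        simp
      · rw [letters_eq_zero b hw1]; ring
    · rw [ih u hun]; ring

theorem abs_spow_le : ∀ (n : ℕ) (v : Word d),
    |spow (letters b) n v| ≤ (n.factorial : ℝ) * (∑ i : Fin d, |b i|) ^ n := by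
  intro n
  set B := ∑ i : Fin d, |b i| with hB
  have hB0 : 0 ≤ B := Finset.sum_nonneg (fun i _ => abs_nonneg _)
  induction n with
  | zero =>
    intro v
    simp only [spow, unit, Nat.factorial_zero, pow_zero]
    split_ifs <;> norm_num
  | succ n ih =>
    intro v
    by_cases hv : v.length = n + 1
    · rw [spow, shuffle]
      calc |∑ k ∈ Finset.range (v.length + 1), ∑ u ∈ wordsLen d k,
              ∑ w ∈ wordsLen d (v.length - k),
              spow (letters b) n u * letters b w * ((shuffleW u w).count v : ℝ)|
          ≤ ∑ k ∈ Finset.range (v.length + 1), ∑ u ∈ wordsLen d k,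
              ∑ w ∈ wordsLen d (v.length - k),
              |spow (letters b) n u * letters b w * ((shuffleW u w).count v : ℝ)| := by
            refine (Finset.abs_sum_le_sum_abs _ _).trans ?_
            gcongr with k hk
            refine (Finset.abs_sum_le_sum_abs _ _).trans ?_
            gcongr with u hu
            exact Finset.abs_sum_le_sum_abs _ _
        _ ≤ ∑ k ∈ Finset.range (v.length + 1), ∑ u ∈ wordsLen d k,
              ∑ w ∈ wordsLen d (v.length - k),
              (if k = n then ((n.factorial : ℝ) * B ^ n) * |letters b w|
                  * ((shuffleW u w).count v : ℝ) else 0) := by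
            gcongr with k hk u hu w hw
            rw [mem_wordsLen] at hu hw
            by_cases hkn : k = n
            · rw [if_pos hkn, abs_mul, abs_mul, Nat.abs_cast]
              subst hkn
              exact mul_le_mul_of_nonneg_right
                (mul_le_mul_of_nonneg_right (ih u) (abs_nonneg _)) (Nat.cast_nonneg _)
            · rw [if_neg hkn, spow_eq_zero b n u (by omega)]
              simp
        _ ≤ (((n+1).factorial : ℝ)) * B ^ (n+1) := by
            have hpull : ∀ k, (∑ u ∈ wordsLen d k, ∑ w ∈ wordsLen d (v.length - k),
                (if k = n then ((n.factorial : ℝ) * B ^ n) * |letters b w|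
                  * ((shuffleW u w).count v : ℝ) else 0))
                = if k = n then (∑ u ∈ wordsLen d k, ∑ w ∈ wordsLen d (v.length - k),
                    ((n.factorial : ℝ) * B ^ n) * |letters b w|
                      * ((shuffleW u w).count v : ℝ)) else 0 := by
              intro k
              by_cases h : k = n <;> simp [h]
            rw [Finset.sum_congr rfl (fun k _ => hpull k),
              Finset.sum_ite_eq' (Finset.range (v.length + 1)) n,
              if_pos (by rw [Finset.mem_range]; omega)]
            · -- now sum over u ∈ wordsLen n, w ∈ wordsLen (v.length - n) = wordsLen 1
              have hlen : v.length - n = 1 := by omega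
              rw [hlen]
              have h1 : ∀ u, ∑ w ∈ wordsLen d 1, ((n.factorial : ℝ) * B ^ n) * |letters b w|
                  * ((shuffleW u w).count v : ℝ)
                  = ∑ j : Fin d, ((n.factorial : ℝ) * B ^ n) * |b j|
                      * ((shuffleW u [j]).count v : ℝ) := by
                intro u
                rw [show (1:ℕ) = 0 + 1 by rfl, sum_wordsLen_succ, Finset.sum_congr rfl]
                intro j _
                rw [wordsLen_zero, Finset.sum_singleton]
                rfl
              rw [Finset.sum_congr rfl (fun u _ => h1 u), Finset.sum_comm]
              calc ∑ j : Fin d, ∑ u ∈ wordsLen d n, ((n.factorial : ℝ) * B ^ n) * |b j|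
                      * ((shuffleW u [j]).count v : ℝ)
                  = ∑ j : Fin d, ((n.factorial : ℝ) * B ^ n) * |b j|
                      * ((∑ u ∈ wordsLen d n, (shuffleW u [j]).count v : ℕ) : ℝ) := by
                    refine Finset.sum_congr rfl fun j _ => ?_
                    rw [← Finset.mul_sum, Nat.cast_sum]
                _ ≤ ∑ j : Fin d, ((n.factorial : ℝ) * B ^ n) * |b j| * ((n : ℝ) + 1) := by
                    refine Finset.sum_le_sum fun j _ => ?_
                    refine mul_le_mul_of_nonneg_left ?_ (by positivity)
                    exact_mod_cast sum_count_shuffleW_single j v n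
                _ = (((n+1).factorial : ℝ)) * B ^ (n+1) := by
                    rw [← Finset.sum_mul, ← Finset.mul_sum]
                    rw [Nat.factorial_succ]
                    push_cast
                    ring
    · rw [spow_eq_zero b (n+1) v hv]
      simp only [abs_zero]
      positivity

theorem shuexp_eq (v : Word d) :
    shuexp (letters b) v = spow (letters b) v.length v / (v.length.factorial : ℝ) := by
  rw [shuexp]
  exact tsum_eq_single v.length (fun n hn => by rw [spow_eq_zero b n v (Ne.symm hn)]; simp)

theorem abs_shuexp_le (v : Word d) :
    |shuexp (letters b) v| ≤ (∑ i : Fin d, |b i|) ^ v.length := by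
  rw [shuexp_eq, abs_div, Nat.abs_cast]
  rw [div_le_iff₀ (by positivity)]
  calc |spow (letters b) v.length v|
      ≤ (v.length.factorial : ℝ) * (∑ i : Fin d, |b i|) ^ v.length := abs_spow_le b _ v
    _ = (∑ i : Fin d, |b i|) ^ v.length * (v.length.factorial : ℝ) := by ring

theorem hockey (N n : ℕ) : ∑ k ∈ Finset.range N, k.choose n = N.choose (n+1) := by
  induction N with
  | zero => simp
  | succ N ih => rw [Finset.sum_range_succ, ih, Nat.choose_succ_succ, Nat.add_comm]

/-- geometric bound on q from domination. -/
theorem q_bound (a b : Fin d → ℝ) (q : ETA d) (hq0 : q [] = 0)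
    (hdom :
      (∀ v : Word d, |q v| ≤ concat (letters a) (shuexp (letters b)) v) ∨
      (∀ v : Word d, |q v| ≤ concat (shuexp (letters b)) (letters a) v)) :
    ∀ v : Word d, |q v| ≤ ((∑ i : Fin d, |a i|) + (∑ i : Fin d, |b i|) + 1) ^ v.length := by
  set A := ∑ i : Fin d, |a i| with hA
  set B := ∑ i : Fin d, |b i| with hB
  have hA0 : 0 ≤ A := Finset.sum_nonneg (fun i _ => abs_nonneg _)
  have hB0 : 0 ≤ B := Finset.sum_nonneg (fun i _ => abs_nonneg _)
  set M := A + B + 1 with hM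
  have hM1 : 1 ≤ M := by simp [hM]; positivity
  intro v
  rcases eq_or_ne v [] with rfl | hv
  · simpa [hq0] using one_le_pow₀ hM1
  · have hlen : 1 ≤ v.length := by
      rcases v with _ | ⟨c, v'⟩
      · simp at hv
      · simp
    have key : |q v| ≤ A * B ^ (v.length - 1) := by
      rcases hdom with hdom | hdom
      · refine (hdom v).trans ?_
        have hterm : ∀ k ∈ Finset.range (v.length + 1),
            letters a (v.take k) * shuexp (letters b) (v.drop k)
              ≤ if k = 1 then A * B ^ (v.length - 1) else 0 := by
          intro k hk
          rw [Finset.mem_range] at hk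
          by_cases hk1 : k = 1
          · subst hk1
            rw [if_pos rfl]
            calc letters a (v.take 1) * shuexp (letters b) (v.drop 1)
                ≤ |letters a (v.take 1)| * |shuexp (letters b) (v.drop 1)| := by
                  rw [← abs_mul]; exact le_abs_self _
              _ ≤ A * B ^ (v.drop 1).length := by
                  exact mul_le_mul (abs_letters_le a _) (abs_shuexp_le b _)
                    (abs_nonneg _) hA0
              _ = A * B ^ (v.length - 1) := by rw [List.length_drop]
          · rw [if_neg hk1, letters_eq_zero a, zero_mul]
            rw [List.length_take]
            omega
        calc concat (letters a) (shuexp (letters b)) v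
            ≤ ∑ k ∈ Finset.range (v.length + 1), if k = 1 then A * B ^ (v.length - 1) else 0 :=
              Finset.sum_le_sum hterm
          _ ≤ A * B ^ (v.length - 1) := by
              rw [Finset.sum_ite_eq' (Finset.range (v.length + 1)) 1]
              split_ifs
              · exact le_rfl
              · positivity
      · refine (hdom v).trans ?_
        have hterm : ∀ k ∈ Finset.range (v.length + 1),
            shuexp (letters b) (v.take k) * letters a (v.drop k)
              ≤ if k = v.length - 1 then A * B ^ (v.length - 1) else 0 := by
          intro k hk
          rw [Finset.mem_range] at hk
          by_cases hk1 : k = v.length - 1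
          · subst hk1
            rw [if_pos rfl]
            calc shuexp (letters b) (v.take (v.length - 1)) * letters a (v.drop (v.length - 1))
                ≤ |shuexp (letters b) (v.take (v.length - 1))| * |letters a (v.drop (v.length - 1))| := by
                  rw [← abs_mul]; exact le_abs_self _
              _ ≤ B ^ (v.take (v.length - 1)).length * A :=
                  mul_le_mul (abs_shuexp_le b _) (abs_letters_le a _) (abs_nonneg _) (by positivity)
              _ = A * B ^ (v.length - 1) := by
                  rw [List.length_take, mul_comm]
                  congr 2
                  omega
          · rw [if_neg hk1, letters_eq_zero a, mul_zero]
            rw [List.length_drop]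
            omega
        calc concat (shuexp (letters b)) (letters a) v
            ≤ ∑ k ∈ Finset.range (v.length + 1),
                if k = v.length - 1 then A * B ^ (v.length - 1) else 0 :=
              Finset.sum_le_sum hterm
          _ ≤ A * B ^ (v.length - 1) := by
              rw [Finset.sum_ite_eq' (Finset.range (v.length + 1)) (v.length - 1)]
              split_ifs
              · exact le_rfl
              · positivity
    refine key.trans ?_
    calc A * B ^ (v.length - 1) ≤ M * M ^ (v.length - 1) := by
          refine mul_le_mul (by simp [hM]; linarith) (pow_le_pow_left₀ hB0 (by simp [hM]; linarith) _)
            (by positivity) (by linarith)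
      _ = M ^ (v.length - 1 + 1) := by rw [pow_succ]; ring
      _ = M ^ v.length := by congr 1; omega

theorem cpow_eq_zero {q : ETA d} (hq0 : q [] = 0) :
    ∀ (n : ℕ) (v : Word d), v.length < n → cpow q n v = 0 := by
  intro n
  induction n with
  | zero => intro v hv; omega
  | succ n ih =>
    intro v hv
    rw [cpow, concat]
    refine Finset.sum_eq_zero fun k hk => ?_
    rw [Finset.mem_range] at hk
    rcases eq_or_lt_of_le (Nat.lt_succ_iff.mp hk) with hkv | hkv
    · rw [List.drop_eq_nil_of_le (le_of_eq hkv.symm), hq0, mul_zero]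
    · rw [ih (v.take k) (by rw [List.length_take]; omega), zero_mul]

theorem abs_cpow_le {q : ETA d} {M : ℝ} (hM1 : 1 ≤ M) (hq0 : q [] = 0)
    (hq : ∀ v : Word d, |q v| ≤ M ^ v.length) :
    ∀ (n : ℕ) (v : Word d), |cpow q n v| ≤ (v.length.choose n : ℝ) * M ^ v.length := by
  have hM0 : (0:ℝ) ≤ M := by linarith
  intro n
  induction n with
  | zero =>
    intro v
    simp only [cpow, unit, Nat.choose_zero_right, Nat.cast_one, one_mul]
    split_ifs
    · simpa using one_le_pow₀ hM1
    · simp; positivity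
  | succ n ih =>
    intro v
    rw [cpow, concat]
    calc |∑ k ∈ Finset.range (v.length + 1), cpow q n (v.take k) * q (v.drop k)|
        ≤ ∑ k ∈ Finset.range (v.length + 1), |cpow q n (v.take k)| * |q (v.drop k)| := by
          refine (Finset.abs_sum_le_sum_abs _ _).trans ?_
          refine Finset.sum_le_sum fun k _ => ?_
          rw [abs_mul]
      _ ≤ ∑ k ∈ Finset.range (v.length + 1),
            (if k < v.length then ((k.choose n : ℝ) * M ^ v.length) else 0) := by
          refine Finset.sum_le_sum fun k hk => ?_
          rw [Finset.mem_range] at hk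
          by_cases hkv : k < v.length
          · rw [if_pos hkv]
            calc |cpow q n (v.take k)| * |q (v.drop k)|
                ≤ ((v.take k).length.choose n : ℝ) * M ^ (v.take k).length
                    * M ^ (v.drop k).length :=
                  mul_le_mul (ih _) (hq _) (abs_nonneg _) (by positivity)
              _ = (k.choose n : ℝ) * M ^ v.length := by
                  rw [List.length_take, List.length_drop, min_eq_left (by omega), mul_assoc,
                    ← pow_add]
                  congr 2
                  omega
          · rw [if_neg hkv]
            have : v.drop k = [] := List.drop_eq_nil_of_le (by omega)
            rw [this, hq0, abs_zero, mul_zero]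
      _ ≤ ((v.length.choose (n+1) : ℝ)) * M ^ v.length := by
          have : ∀ k ∈ Finset.range (v.length + 1),
              (if k < v.length then ((k.choose n : ℝ) * M ^ v.length) else 0)
                = (if k < v.length then (k.choose n : ℝ) else 0) * M ^ v.length := by
            intro k _
            split_ifs <;> simp
          rw [Finset.sum_congr rfl this, ← Finset.sum_mul]
          refine mul_le_mul_of_nonneg_right ?_ (by positivity)
          have h2 : ∑ k ∈ Finset.range (v.length + 1), (if k < v.length then (k.choose n : ℝ) else 0)
              = ∑ k ∈ Finset.range v.length, (k.choose n : ℝ) := by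
            rw [← Finset.sum_subset (Finset.range_subset_range.mpr (Nat.le_succ _))
              (fun x hx hnx => by
                rw [Finset.mem_range] at hx hnx
                rw [if_neg hnx])]
            refine Finset.sum_congr rfl fun k hk => ?_
            rw [Finset.mem_range] at hk
            rw [if_pos hk]
          rw [h2, ← Nat.cast_sum, hockey]

theorem res_eq_sum (q : ETA d) (hq0 : q [] = 0) (v : Word d) :
    res q v = ∑ n ∈ Finset.range (v.length + 1), cpow q n v := by
  refine tsum_eq_sum fun n hn => ?_
  rw [Finset.mem_range] at hn
  exact cpow_eq_zero hq0 n v (by omega)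

theorem abs_res_le {q : ETA d} {M : ℝ} (hM1 : 1 ≤ M) (hq0 : q [] = 0)
    (hq : ∀ v : Word d, |q v| ≤ M ^ v.length) (v : Word d) :
    |res q v| ≤ (2 * M) ^ v.length := by
  rw [res_eq_sum q hq0 v]
  calc |∑ n ∈ Finset.range (v.length + 1), cpow q n v|
      ≤ ∑ n ∈ Finset.range (v.length + 1), (v.length.choose n : ℝ) * M ^ v.length :=
        (Finset.abs_sum_le_sum_abs _ _).trans
          (Finset.sum_le_sum fun n _ => abs_cpow_le hM1 hq0 hq n v)
    _ = ((∑ n ∈ Finset.range (v.length + 1), v.length.choose n : ℕ) : ℝ) * M ^ v.length := by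
        rw [← Finset.sum_mul, Nat.cast_sum]
    _ = (2:ℝ) ^ v.length * M ^ v.length := by rw [Nat.sum_range_choose]; push_cast; ring
    _ = (2 * M) ^ v.length := (mul_pow 2 M v.length).symm


end NZ

section H
variable [NeZero d] {C T : ℝ}

theorem hfun_pos (hC : 2 ≤ C) (hT : 0 < T) (v : Word d) : 0 < hfun C T v := by
  have h1 : (0:ℝ) < C := by linarith
  have h2 : (0:ℝ) < 2 * T := by linarith
  have h3 : (0:ℝ) < ((v.length : ℝ) + 1) := by positivity
  apply div_pos
  · exact mul_pos (mul_pos h1 (Real.rpow_pos_of_pos h3 _)) (Real.rpow_pos_of_pos h2 _)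
  · exact Real.sqrt_pos.mpr (by exact_mod_cast Nat.factorial_pos _)

theorem hfun_le (hC : 2 ≤ C) (hT : 0 < T) (v : Word d) :
    hfun C T v ≤ C * (max 1 (2*T)) ^ v.length / Real.sqrt ((v.length - 1).factorial) := by
  have h1 : (0:ℝ) < C := by linarith
  have h2 : (0:ℝ) < 2 * T := by linarith
  set n := v.length
  set x := v.count 0
  have hx : x ≤ n := List.count_le_length (a := 0) (l := v)
  have hR1 : (1:ℝ) ≤ max 1 (2*T) := le_max_left _ _
  apply div_le_div₀
  · positivity
  · calc C * ((n : ℝ) + 1) ^ (-(1/4 : ℝ)) * (2 * T) ^ (((n + x : ℕ) : ℝ) / 2)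
        ≤ C * 1 * (max 1 (2*T)) ^ n := by
          refine mul_le_mul (mul_le_mul_of_nonneg_left ?_ (le_of_lt h1)) ?_ (by positivity)
            (by positivity)
          · exact Real.rpow_le_one_of_one_le_of_nonpos (by push_cast; linarith [Nat.cast_nonneg (α := ℝ) n]) (by norm_num)
          · calc (2 * T) ^ (((n + x : ℕ) : ℝ) / 2)
                ≤ (max 1 (2*T)) ^ (((n + x : ℕ) : ℝ) / 2) :=
                  Real.rpow_le_rpow (le_of_lt h2) (le_max_right _ _) (by positivity)
              _ ≤ (max 1 (2*T)) ^ ((n:ℝ)) := by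
                  refine Real.rpow_le_rpow_of_exponent_le hR1 ?_
                  push_cast
                  have : (x:ℝ) ≤ (n:ℝ) := by exact_mod_cast hx
                  linarith
              _ = (max 1 (2*T)) ^ n := Real.rpow_natCast _ n
        _ = C * (max 1 (2*T)) ^ n := by ring
  · exact Real.sqrt_pos.mpr (by exact_mod_cast Nat.factorial_pos _)
  · exact Real.sqrt_le_sqrt (by exact_mod_cast Nat.factorial_le (by omega))

theorem summable_pow_div_sqrt_factorial (K : ℝ) (hK : 0 ≤ K) :
    Summable (fun n : ℕ => K ^ n / Real.sqrt ((n - 1).factorial)) := by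
  refine summable_of_ratio_norm_eventually_le (r := 1/2) (by norm_num) ?_
  rw [Filter.eventually_atTop]
  refine ⟨⌈(2*K)^2⌉₊ + 1, fun n hn => ?_⟩
  obtain ⟨m, rfl⟩ : ∃ m, n = m + 1 := ⟨n - 1, by omega⟩
  have hm : ((2*K)^2 : ℝ) ≤ ((m:ℝ) + 1) := by
    have : (⌈(2*K)^2⌉₊ : ℝ) ≤ ((m:ℝ)+1) := by
      have : ⌈(2*K)^2⌉₊ ≤ m + 1 := by omega
      exact_mod_cast this
    exact le_trans (Nat.le_ceil _) this
  have hs : 2 * K ≤ Real.sqrt ((m:ℝ) + 1) := by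
    rw [show (2*K) = Real.sqrt ((2*K)^2) from (Real.sqrt_sq (by positivity)).symm]
    exact Real.sqrt_le_sqrt hm
  have hsp : (0:ℝ) < Real.sqrt ((m:ℝ) + 1) := Real.sqrt_pos.mpr (by positivity)
  simp only [Real.norm_eq_abs]
  rw [abs_of_nonneg (by positivity), abs_of_nonneg (by positivity)]
  have hfac : (((m + 1 + 1 - 1).factorial : ℕ) : ℝ)
      = ((m:ℝ) + 1) * (((m + 1 - 1).factorial : ℕ) : ℝ) := by
    simp only [Nat.add_sub_cancel]
    rw [Nat.factorial_succ]
    push_cast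
    ring
  simp only [Nat.add_sub_cancel] at hfac ⊢
  rw [hfac, Real.sqrt_mul (by positivity)]
  rw [show (1:ℝ)/2 * (K ^ (m+1) / Real.sqrt ((m.factorial : ℕ) : ℝ))
      = (1/2 * K^(m+1)) / Real.sqrt ((m.factorial : ℕ) : ℝ) from by ring]
  rw [div_le_div_iff₀ (by positivity) (by positivity)]
  have key : K ^ (m+1+1) ≤ 1/2 * K^(m+1) * Real.sqrt ((m:ℝ)+1) := by
    have h9 : K ^ (m+1+1) = K * K^(m+1) := by ring
    rw [h9]
    calc K * K^(m+1) ≤ (1/2 * Real.sqrt ((m:ℝ)+1)) * K^(m+1) := by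
          refine mul_le_mul_of_nonneg_right ?_ (by positivity)
          linarith
      _ = 1/2 * K^(m+1) * Real.sqrt ((m:ℝ)+1) := by ring
  calc K ^ (m+1+1) * Real.sqrt ((m.factorial : ℕ) : ℝ)
      ≤ (1/2 * K^(m+1) * Real.sqrt ((m:ℝ)+1)) * Real.sqrt ((m.factorial : ℕ) : ℝ) :=
        mul_le_mul_of_nonneg_right key (by positivity)
    _ = 1/2*K^(m+1) * (Real.sqrt ((m:ℝ)+1) * Real.sqrt ((m.factorial : ℕ) : ℝ)) := by ring
 
theorem summable_word_of_length (F : ℕ → ℝ) (hF : ∀ n, 0 ≤ F n)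
    (h : Summable fun n : ℕ => ((d:ℝ)) ^ n * F n) :
    Summable fun v : Word d => F v.length := by
  rw [← Equiv.summable_iff (List.equivSigmaTuple (α := Fin d)).symm]
  have hfun_eq : ((fun v : Word d => F v.length) ∘ (List.equivSigmaTuple (α := Fin d)).symm)
      = fun x : (n : ℕ) × (Fin n → Fin d) => F x.1 := by
    funext x
    obtain ⟨n, t⟩ := x
    simp [List.equivSigmaTuple]
  rw [hfun_eq]
  rw [summable_sigma_of_nonneg (fun x => hF x.1)]
  constructor
  · intro n
    exact Summable.of_finite (f := fun _ : Fin n → Fin d => F n)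
  · have htsum : ∀ n : ℕ, (∑' _ : Fin n → Fin d, F n) = (d:ℝ) ^ n * F n := by
      intro n
      rw [tsum_eq_sum (s := Finset.univ) (by simp), Finset.sum_const, nsmul_eq_mul]
      congr 1
      rw [Finset.card_univ, Fintype.card_fun]
      push_cast
      simp
    rw [show (fun n : ℕ => ∑' _ : Fin n → Fin d, F n) = fun n : ℕ => (d:ℝ)^n * F n
      from funext htsum]
    exact h

theorem summable_mul_hfun (hC : 2 ≤ C) (hT : 0 < T) (c : ℝ) (hc : 0 ≤ c) :
    Summable (fun v : Word d => c ^ v.length * hfun C T v) := by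
  set R := max 1 (2*T) with hR
  have hR0 : (0:ℝ) ≤ R := le_trans zero_le_one (le_max_left _ _)
  have hC0 : (0:ℝ) < C := by linarith
  have hmaj : Summable (fun v : Word d =>
      C * ((c * R) ^ v.length / Real.sqrt (((v.length - 1).factorial : ℕ) : ℝ))) := by
    refine summable_word_of_length
      (fun n => C * ((c * R) ^ n / Real.sqrt (((n - 1).factorial : ℕ) : ℝ)))
      (fun n => by positivity) ?_
    have hmaj2 : Summable (fun n : ℕ =>
        C * (((d:ℝ) * (c * R)) ^ n / Real.sqrt (((n - 1).factorial : ℕ) : ℝ))) :=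
      (summable_pow_div_sqrt_factorial ((d:ℝ) * (c * R)) (by positivity)).mul_left C
    refine Summable.of_nonneg_of_le (fun n => by positivity)
      (fun n => le_of_eq (by rw [mul_pow]; ring)) hmaj2
  refine Summable.of_nonneg_of_le
    (fun v => mul_nonneg (by positivity) (le_of_lt (hfun_pos hC hT v))) (fun v => ?_) hmaj
  calc c ^ v.length * hfun C T v
      ≤ c ^ v.length * (C * R ^ v.length / Real.sqrt (((v.length - 1).factorial : ℕ) : ℝ)) :=
        mul_le_mul_of_nonneg_left (hfun_le hC hT v) (by positivity)
    _ = C * ((c * R) ^ v.length / Real.sqrt (((v.length - 1).factorial : ℕ) : ℝ)) := by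
        rw [mul_pow]
        ring

theorem rpow_quarter_16 : (16:ℝ) ^ (1/4:ℝ) = 2 := by
  rw [show (16:ℝ) = 2^(4:ℕ) by norm_num, ← Real.rpow_natCast (2:ℝ) 4,
    ← Real.rpow_mul (by norm_num)]
  norm_num

set_option maxHeartbeats 1000000 in
theorem key_arith (hC : 2 ≤ C) (n m x y : ℕ) (hxn : x ≤ n) (hym : y ≤ m) :
    (((n+m:ℕ):ℝ) + 1) ^ (-(1/4:ℝ))
        * (Real.sqrt (((n+x-1).factorial : ℕ):ℝ) * Real.sqrt (((m+y-1).factorial : ℕ):ℝ))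
      ≤ C * (((n:ℝ)+1) ^ (-(1/4:ℝ)) * ((m:ℝ)+1) ^ (-(1/4:ℝ)))
        * Real.sqrt ((((n+x)+(m+y)-1).factorial : ℕ):ℝ) := by
  have hC0 : (0:ℝ) < C := by linarith
  set A := n + x with hA
  set B := m + y with hB
  rcases Nat.eq_zero_or_pos n with hn0 | hn0
  · have hx0 : x = 0 := by omega
    have hA0 : A = 0 := by omega
    rw [hn0, hA0]
    simp only [Nat.zero_add, Nat.zero_sub, Nat.factorial_zero, Nat.cast_one, Real.sqrt_one,
      Nat.cast_zero, one_mul, mul_one, zero_add, add_zero, Real.one_rpow]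
    have h1 : (0:ℝ) ≤ ((m:ℝ)+1) ^ (-(1/4:ℝ)) := le_of_lt (Real.rpow_pos_of_pos (by positivity) _)
    have h2 : (0:ℝ) ≤ Real.sqrt (((B-1).factorial : ℕ):ℝ) := Real.sqrt_nonneg _
    nlinarith [mul_nonneg h1 h2]
  rcases Nat.eq_zero_or_pos m with hm0 | hm0
  · have hy0 : y = 0 := by omega
    have hB0 : B = 0 := by omega
    rw [hm0, hB0]
    simp only [Nat.add_zero, Nat.zero_sub, Nat.factorial_zero, Nat.cast_one, Real.sqrt_one,
      Nat.cast_zero, one_mul, mul_one, zero_add, add_zero, Real.one_rpow]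
    have h1 : (0:ℝ) ≤ ((n:ℝ)+1) ^ (-(1/4:ℝ)) := le_of_lt (Real.rpow_pos_of_pos (by positivity) _)
    have h2 : (0:ℝ) ≤ Real.sqrt (((A-1).factorial : ℕ):ℝ) := Real.sqrt_nonneg _
    nlinarith [mul_nonneg h1 h2]
  -- main case
  have hA1 : 1 ≤ A := by omega
  have hB1 : 1 ≤ B := by omega
  set s := A + B - 1 with hs
  have hsn : n ≤ s := by omega
  have hsm : m ≤ s := by omega
  have hfacdvd : (A-1).factorial * (B-1).factorial ≤ (A+B-2).factorial := by
    refine Nat.le_of_dvd (Nat.factorial_pos _) ?_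
    have := Nat.factorial_mul_factorial_dvd_factorial_add (A-1) (B-1)
    rwa [show A - 1 + (B - 1) = A + B - 2 by omega] at this
  have hfac : (A-1).factorial * (B-1).factorial * s ≤ s.factorial := by
    have hs1 : 1 ≤ s := by omega
    have h9 : s.factorial = s * (s-1).factorial := (Nat.mul_factorial_pred (Nat.one_le_iff_ne_zero.mp hs1)).symm
    rw [h9, show s - 1 = A + B - 2 by omega, mul_comm s _]
    exact Nat.mul_le_mul_right s hfacdvd
  have ha : Real.sqrt ((s:ℕ):ℝ) * (Real.sqrt (((A-1).factorial : ℕ):ℝ)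
        * Real.sqrt (((B-1).factorial : ℕ):ℝ))
      ≤ Real.sqrt ((s.factorial : ℕ):ℝ) := by
    rw [← Real.sqrt_mul (by positivity), ← Real.sqrt_mul (by positivity)]
    refine Real.sqrt_le_sqrt ?_
    have hc := (Nat.cast_le (α := ℝ)).mpr hfac
    push_cast at hc
    push_cast
    nlinarith [hc]
  have hQn : (0:ℝ) < ((n:ℝ)+1) ^ ((1/4:ℝ)) := Real.rpow_pos_of_pos (by positivity) _
  have hQm : (0:ℝ) < ((m:ℝ)+1) ^ ((1/4:ℝ)) := Real.rpow_pos_of_pos (by positivity) _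
  have hQ : (0:ℝ) < (((n+m:ℕ):ℝ)+1) ^ ((1/4:ℝ)) := Real.rpow_pos_of_pos (by positivity) _
  have hsq : (0:ℝ) < Real.sqrt ((s:ℕ):ℝ) := Real.sqrt_pos.mpr (by
    have h9 : (1:ℝ) ≤ (s:ℝ) := by exact_mod_cast (by omega : 1 ≤ s)
    linarith)
  have hnat : ((n:ℝ)+1)*((m:ℝ)+1) ≤ 16*(((n+m:ℕ):ℝ)+1)*((s:ℝ)*(s:ℝ)) := by
    have c1 : (1:ℝ) ≤ (n:ℝ) := by exact_mod_cast hn0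
    have c2 : (1:ℝ) ≤ (m:ℝ) := by exact_mod_cast hm0
    have c3 : (n:ℝ) ≤ (s:ℝ) := by exact_mod_cast hsn
    have c4 : (m:ℝ) ≤ (s:ℝ) := by exact_mod_cast hsm
    push_cast
    nlinarith [mul_le_mul c3 c4 (by linarith) (by linarith)]
  have hss : ((s:ℝ)*(s:ℝ)) ^ (1/4:ℝ) = Real.sqrt ((s:ℕ):ℝ) := by
    rw [← sq, ← Real.rpow_natCast ((s:ℕ):ℝ) 2, ← Real.rpow_mul (by positivity),
      Real.sqrt_eq_rpow]
    norm_num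
  have hb : ((n:ℝ)+1) ^ ((1/4:ℝ)) * ((m:ℝ)+1) ^ ((1/4:ℝ))
      ≤ C * ((((n+m:ℕ):ℝ)+1) ^ ((1/4:ℝ))) * Real.sqrt ((s:ℕ):ℝ) := by
    calc ((n:ℝ)+1) ^ ((1/4:ℝ)) * ((m:ℝ)+1) ^ ((1/4:ℝ))
        = (((n:ℝ)+1) * ((m:ℝ)+1)) ^ ((1/4:ℝ)) :=
          (Real.mul_rpow (by positivity) (by positivity)).symm
      _ ≤ (16*(((n+m:ℕ):ℝ)+1)*((s:ℝ)*(s:ℝ))) ^ ((1/4:ℝ)) :=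
          Real.rpow_le_rpow (by positivity) hnat (by norm_num)
      _ = (16:ℝ) ^ (1/4:ℝ) * (((n+m:ℕ):ℝ)+1) ^ (1/4:ℝ) * (((s:ℝ)*(s:ℝ)) ^ (1/4:ℝ)) := by
          rw [Real.mul_rpow (by positivity) (by positivity),
            Real.mul_rpow (by positivity) (by positivity)]
      _ = 2 * (((n+m:ℕ):ℝ)+1) ^ (1/4:ℝ) * Real.sqrt ((s:ℕ):ℝ) := by
          rw [rpow_quarter_16, hss]
      _ ≤ C * ((((n+m:ℕ):ℝ)+1) ^ ((1/4:ℝ))) * Real.sqrt ((s:ℕ):ℝ) := by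
          refine mul_le_mul_of_nonneg_right (mul_le_mul_of_nonneg_right hC ?_) ?_ <;> positivity
  have hb' : (((n+m:ℕ):ℝ) + 1) ^ (-(1/4:ℝ))
      ≤ C * (((n:ℝ)+1) ^ (-(1/4:ℝ)) * ((m:ℝ)+1) ^ (-(1/4:ℝ))) * Real.sqrt ((s:ℕ):ℝ) := by
    rw [Real.rpow_neg (by positivity), Real.rpow_neg (by positivity),
      Real.rpow_neg (by positivity)]
    rw [show C * ((((n:ℝ)+1) ^ (1/4:ℝ))⁻¹ * (((m:ℝ)+1) ^ (1/4:ℝ))⁻¹) * Real.sqrt ((s:ℕ):ℝ)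
        = (C * Real.sqrt ((s:ℕ):ℝ)) / (((n:ℝ)+1) ^ (1/4:ℝ) * ((m:ℝ)+1) ^ (1/4:ℝ)) from by
      field_simp]
    rw [inv_eq_one_div, div_le_div_iff₀ hQ (by positivity), one_mul]
    exact hb.trans (le_of_eq (by ring))
  calc (((n+m:ℕ):ℝ) + 1) ^ (-(1/4:ℝ))
        * (Real.sqrt (((A-1).factorial : ℕ):ℝ) * Real.sqrt (((B-1).factorial : ℕ):ℝ))
      ≤ (C * (((n:ℝ)+1) ^ (-(1/4:ℝ)) * ((m:ℝ)+1) ^ (-(1/4:ℝ))) * Real.sqrt ((s:ℕ):ℝ))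
        * (Real.sqrt (((A-1).factorial : ℕ):ℝ) * Real.sqrt (((B-1).factorial : ℕ):ℝ)) := by
        refine mul_le_mul_of_nonneg_right hb' (by positivity)
    _ = (C * (((n:ℝ)+1) ^ (-(1/4:ℝ)) * ((m:ℝ)+1) ^ (-(1/4:ℝ))))
        * (Real.sqrt ((s:ℕ):ℝ) * (Real.sqrt (((A-1).factorial : ℕ):ℝ)
            * Real.sqrt (((B-1).factorial : ℕ):ℝ))) := by ring
    _ ≤ (C * (((n:ℝ)+1) ^ (-(1/4:ℝ)) * ((m:ℝ)+1) ^ (-(1/4:ℝ))))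
        * Real.sqrt ((s.factorial : ℕ):ℝ) := by
        have h1 : (0:ℝ) ≤ ((n:ℝ)+1) ^ (-(1/4:ℝ)) := le_of_lt (Real.rpow_pos_of_pos (by positivity) _)
        have h2 : (0:ℝ) ≤ ((m:ℝ)+1) ^ (-(1/4:ℝ)) := le_of_lt (Real.rpow_pos_of_pos (by positivity) _)
        exact mul_le_mul_of_nonneg_left ha (by positivity)
    _ = C * (((n:ℝ)+1) ^ (-(1/4:ℝ)) * ((m:ℝ)+1) ^ (-(1/4:ℝ)))
        * Real.sqrt (((A+B-1).factorial : ℕ):ℝ) := by rw [hs]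

set_option maxHeartbeats 1000000 in
theorem hfun_submult (hC : 2 ≤ C) (hT : 0 < T) (u w : Word d) :
    hfun C T (u ++ w) ≤ hfun C T u * hfun C T w := by
  have h2T : (0:ℝ) < 2 * T := by linarith
  have hC0 : (0:ℝ) < C := by linarith
  have hxn : u.count 0 ≤ u.length := List.count_le_length (a := 0) (l := u)
  have hym : w.count 0 ≤ w.length := List.count_le_length (a := 0) (l := w)
  obtain ⟨n, hn⟩ : ∃ n, u.length = n := ⟨_, rfl⟩
  obtain ⟨m, hm⟩ : ∃ m, w.length = m := ⟨_, rfl⟩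
  obtain ⟨x, hx⟩ : ∃ x, u.count 0 = x := ⟨_, rfl⟩
  obtain ⟨y, hy⟩ : ∃ y, w.count 0 = y := ⟨_, rfl⟩
  rw [hn, hx] at hxn
  rw [hm, hy] at hym
  have hlen : (u ++ w).length = n + m := by rw [List.length_append, hn, hm]
  have hcnt : (u ++ w).count 0 = x + y := by rw [List.count_append, hx, hy]
  have key := key_arith hC n m x y hxn hym
  show C * (((u ++ w).length : ℝ) + 1) ^ (-(1/4 : ℝ))
      * (2 * T) ^ ((((u ++ w).length + (u ++ w).count 0 : ℕ) : ℝ) / 2)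
      / Real.sqrt (Nat.factorial ((u ++ w).length + (u ++ w).count 0 - 1)) ≤ _
  rw [hlen, hcnt]
  show _ ≤ (C * ((u.length : ℝ) + 1) ^ (-(1/4 : ℝ))
      * (2 * T) ^ (((u.length + u.count 0 : ℕ) : ℝ) / 2)
      / Real.sqrt (Nat.factorial (u.length + u.count 0 - 1)))
    * (C * ((w.length : ℝ) + 1) ^ (-(1/4 : ℝ))
      * (2 * T) ^ (((w.length + w.count 0 : ℕ) : ℝ) / 2)
      / Real.sqrt (Nat.factorial (w.length + w.count 0 - 1)))
  rw [hn, hm, hx, hy]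
  rw [div_mul_div_comm, div_le_div_iff₀ (by positivity) (by positivity)]
  have hS : (2 * T) ^ ((((n+x)+(m+y) : ℕ) : ℝ) / 2)
      = (2 * T) ^ (((n+x : ℕ) : ℝ) / 2) * (2 * T) ^ (((m+y : ℕ) : ℝ) / 2) := by
    rw [← Real.rpow_add h2T]
    congr 1
    push_cast
    ring
  have e2 : (n + m) + (x + y) = (n+x) + (m+y) := by omega
  rw [e2]
  calc C * (((n+m:ℕ):ℝ) + 1) ^ (-(1/4:ℝ)) * (2 * T) ^ ((((n+x)+(m+y) : ℕ) : ℝ) / 2)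
        * (Real.sqrt (((n+x-1).factorial : ℕ):ℝ) * Real.sqrt (((m+y-1).factorial : ℕ):ℝ))
      = (C * (2 * T) ^ ((((n+x)+(m+y) : ℕ) : ℝ) / 2))
        * ((((n+m:ℕ):ℝ) + 1) ^ (-(1/4:ℝ))
          * (Real.sqrt (((n+x-1).factorial : ℕ):ℝ) * Real.sqrt (((m+y-1).factorial : ℕ):ℝ))) := by
        ring
    _ ≤ (C * (2 * T) ^ ((((n+x)+(m+y) : ℕ) : ℝ) / 2))
        * (C * (((n:ℝ)+1) ^ (-(1/4:ℝ)) * ((m:ℝ)+1) ^ (-(1/4:ℝ)))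
          * Real.sqrt ((((n+x)+(m+y)-1).factorial : ℕ):ℝ)) := by
        refine mul_le_mul_of_nonneg_left key (by positivity)
    _ = C * ((n : ℝ) + 1) ^ (-(1/4 : ℝ)) * (2 * T) ^ (((n+x : ℕ) : ℝ) / 2)
        * (C * ((m : ℝ) + 1) ^ (-(1/4 : ℝ)) * (2 * T) ^ (((m+y : ℕ) : ℝ) / 2))
        * Real.sqrt ((((n+x)+(m+y)-1).factorial : ℕ):ℝ) := by
        rw [hS]
        ring


end H

section NZ2
variable [NeZero d]

theorem concat_cons (p q : ETA d) (a : Fin d) (v : Word d) :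
    concat p q (a :: v) = p [] * q (a :: v) + concat (fun w => p (a :: w)) q v := by
  show ∑ k ∈ Finset.range (v.length + 1 + 1), p ((a :: v).take k) * q ((a :: v).drop k) = _
  rw [Finset.sum_range_succ']
  simp only [List.take_succ_cons, List.drop_succ_cons, List.take_zero, List.drop_zero]
  rw [add_comm]
  rfl

theorem concat_addl (p p' q : ETA d) (v : Word d) :
    concat (fun w => p w + p' w) q v = concat p q v + concat p' q v := by
  simp only [concat]
  rw [← Finset.sum_add_distrib]
  refine Finset.sum_congr rfl fun k _ => ?_
  show (p _ + p' _) * _ = _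
  ring

theorem concat_addr (p q q' : ETA d) (v : Word d) :
    concat p (fun w => q w + q' w) v = concat p q v + concat p q' v := by
  simp only [concat]
  rw [← Finset.sum_add_distrib]
  refine Finset.sum_congr rfl fun k _ => ?_
  show _ * (q _ + q' _) = _
  ring

theorem concat_smull (c : ℝ) (p q : ETA d) (v : Word d) :
    concat (fun w => c * p w) q v = c * concat p q v := by
  simp only [concat]
  rw [Finset.mul_sum]
  refine Finset.sum_congr rfl fun k _ => ?_
  show (c * p _) * _ = _
  ring

theorem concat_unit_right (p : ETA d) (v : Word d) : concat p (unit d) v = p v := by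
  show ∑ k ∈ Finset.range (v.length + 1), p (v.take k) * unit d (v.drop k) = p v
  have h1 : ∀ k ∈ Finset.range (v.length + 1),
      p (v.take k) * unit d (v.drop k) = if k = v.length then p v else 0 := by
    intro k hk
    rw [Finset.mem_range] at hk
    by_cases h : k = v.length
    · subst h
      rw [if_pos rfl, List.take_of_length_le le_rfl, List.drop_of_length_le le_rfl]
      simp [unit]
    · rw [if_neg h, unit, if_neg, mul_zero]
      intro hd
      have := congrArg List.length hd
      rw [List.length_drop] at this
      simp at this
      omega
  rw [Finset.sum_congr rfl h1, Finset.sum_ite_eq' (Finset.range (v.length + 1)) v.length]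
  rw [if_pos (by rw [Finset.mem_range]; omega)]

theorem concat_assoc (r s : ETA d) : ∀ (v : Word d) (p : ETA d),
    concat (concat p r) s v = concat p (concat r s) v := by
  intro v
  induction v with
  | nil =>
    intro p
    show ∑ k ∈ Finset.range 1, _ = ∑ k ∈ Finset.range 1, _
    simp only [Finset.sum_range_one]
    show concat p r [] * s [] = p [] * concat r s []
    show (∑ k ∈ Finset.range 1, _) * s [] = p [] * ∑ k ∈ Finset.range 1, _
    simp only [Finset.sum_range_one]
    show p [] * r [] * s [] = p [] * (r [] * s [])
    ring
  | cons a v ih =>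
    intro p
    rw [concat_cons, concat_cons, concat_cons]
    have h1 : (fun w => concat p r (a :: w)) =
        (fun w => p [] * r (a :: w) + concat (fun u => p (a :: u)) r w) := by
      funext w
      rw [concat_cons]
    rw [h1]
    have h2 : concat (fun w => p [] * r (a :: w) + concat (fun u => p (a :: u)) r w) s v
        = p [] * concat (fun w => r (a :: w)) s v + concat (concat (fun u => p (a :: u)) r) s v := by
      rw [concat_addl, concat_smull]
    rw [h2, ih (fun u => p (a :: u))]
    have h3 : concat p r [] = p [] * r [] := by
      show ∑ k ∈ Finset.range 1, _ = _
      simp only [Finset.sum_range_one]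
      rfl
    rw [h3]
    ring

theorem res_fixpoint (q : ETA d) (hq0 : q [] = 0) (v : Word d) :
    res q v = unit d v + concat (res q) q v := by
  have h1 : concat (res q) q v = ∑ n ∈ Finset.range v.length, cpow q (n + 1) v := by
    have h2 : ∀ k ∈ Finset.range (v.length + 1),
        res q (v.take k) * q (v.drop k)
          = ∑ n ∈ Finset.range (v.length + 1), cpow q n (v.take k) * q (v.drop k) := by
      intro k hk
      rw [Finset.mem_range] at hk
      rw [res_eq_sum q hq0, Finset.sum_mul]
      rcases le_or_gt v.length k with h | h
      · have hkv : k = v.length ∨ v.length < k := by omega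
        have htk : (v.take k).length = v.length := by rw [List.length_take]; omega
        rw [htk]
      · -- (v.take k).length = k < v.length; extend sum
        have htk : (v.take k).length = k := by rw [List.length_take]; omega
        rw [htk]
        refine Finset.sum_subset (Finset.range_subset_range.mpr (by omega)) ?_
        intro n hn hnk
        rw [Finset.mem_range] at hn hnk
        rw [cpow_eq_zero hq0 n (v.take k) (by omega), zero_mul]
    show ∑ k ∈ Finset.range (v.length + 1), res q (v.take k) * q (v.drop k) = _
    rw [Finset.sum_congr rfl h2, Finset.sum_comm]
    have h3 : ∀ n ∈ Finset.range (v.length + 1),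
        ∑ k ∈ Finset.range (v.length + 1), cpow q n (v.take k) * q (v.drop k)
          = cpow q (n + 1) v := fun n _ => rfl
    rw [Finset.sum_congr rfl h3]
    -- now reduce range (v.length+1) to range v.length since cpow (n+1) v = 0 for n = v.length
    rw [Finset.sum_range_succ, cpow_eq_zero hq0 (v.length + 1) v (by omega), add_zero]
  rw [h1, res_eq_sum q hq0, Finset.sum_range_succ', add_comm]
  congr 1

theorem main_identity (p q : ETA d) (hq0 : q [] = 0) :
    concat p (res q) = p + concat (concat p (res q)) q := by
  funext v
  have h1 : res q = fun w => unit d w + concat (res q) q w := funext (res_fixpoint q hq0)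
  calc concat p (res q) v
      = concat p (fun w => unit d w + concat (res q) q w) v := by rw [← h1]
    _ = concat p (unit d) v + concat p (concat (res q) q) v := concat_addr p (unit d) _ v
    _ = p v + concat (concat p (res q)) q v := by
        rw [concat_unit_right, ← concat_assoc (res q) q v p]


end NZ2

section H2
variable [NeZero d] {C T : ℝ}
set_option maxHeartbeats 1000000 in
theorem summable_concat (hC : 2 ≤ C) (hT : 0 < T) (f g : ETA d)
    (hf : Summable fun v : Word d => |f v| * hfun C T v)
    (hg : Summable fun v : Word d => |g v| * hfun C T v) :
    Summable fun v : Word d => |concat f g v| * hfun C T v := by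
  set F : Word d × Word d → ℝ :=
    fun z => (|f z.1| * hfun C T z.1) * (|g z.2| * hfun C T z.2) with hF
  have hFnn : ∀ z, 0 ≤ F z := fun z =>
    mul_nonneg (mul_nonneg (abs_nonneg _) (le_of_lt (hfun_pos hC hT _)))
      (mul_nonneg (abs_nonneg _) (le_of_lt (hfun_pos hC hT _)))
  have hFsum : Summable F :=
    hf.mul_of_nonneg hg (fun v => mul_nonneg (abs_nonneg _) (le_of_lt (hfun_pos hC hT _)))
      (fun v => mul_nonneg (abs_nonneg _) (le_of_lt (hfun_pos hC hT _)))
  have hpt : ∀ v : Word d, |concat f g v| * hfun C T v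
      ≤ ∑ k ∈ Finset.range (v.length + 1), F (v.take k, v.drop k) := by
    intro v
    calc |concat f g v| * hfun C T v
        ≤ (∑ k ∈ Finset.range (v.length + 1), |f (v.take k)| * |g (v.drop k)|) * hfun C T v := by
          refine mul_le_mul_of_nonneg_right ?_ (le_of_lt (hfun_pos hC hT _))
          refine (Finset.abs_sum_le_sum_abs _ _).trans ?_
          refine Finset.sum_le_sum fun k _ => le_of_eq (abs_mul _ _)
      _ = ∑ k ∈ Finset.range (v.length + 1), |f (v.take k)| * |g (v.drop k)| * hfun C T v := by
          rw [Finset.sum_mul]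
      _ ≤ ∑ k ∈ Finset.range (v.length + 1), F (v.take k, v.drop k) := by
          refine Finset.sum_le_sum fun k _ => ?_
          have hsub : hfun C T v ≤ hfun C T (v.take k) * hfun C T (v.drop k) := by
            have := hfun_submult hC hT (v.take k) (v.drop k)
            rwa [List.take_append_drop] at this
          calc |f (v.take k)| * |g (v.drop k)| * hfun C T v
              ≤ |f (v.take k)| * |g (v.drop k)| * (hfun C T (v.take k) * hfun C T (v.drop k)) :=
                mul_le_mul_of_nonneg_left hsub (mul_nonneg (abs_nonneg _) (abs_nonneg _))
            _ = F (v.take k, v.drop k) := by rw [hF]; ring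
  refine summable_of_sum_le (c := ∑' z, F z)
    (fun v => mul_nonneg (abs_nonneg _) (le_of_lt (hfun_pos hC hT _))) (fun s => ?_)
  calc ∑ v ∈ s, |concat f g v| * hfun C T v
      ≤ ∑ v ∈ s, ∑ k ∈ Finset.range (v.length + 1), F (v.take k, v.drop k) :=
        Finset.sum_le_sum fun v _ => hpt v
    _ = ∑ z ∈ s.sigma (fun v => Finset.range (v.length + 1)),
          F ((z.1.take z.2, z.1.drop z.2)) :=
        (Finset.sum_sigma s (fun v => Finset.range (v.length + 1))
          (fun z => F (z.1.take z.2, z.1.drop z.2))).symm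
    _ = ∑ y ∈ (s.sigma (fun v => Finset.range (v.length + 1))).image
          (fun z : Σ _ : Word d, ℕ => ((z.1.take z.2 : Word d), (z.1.drop z.2 : Word d))), F y := by
        rw [Finset.sum_image]
        intro z1 h1 z2 h2 heq
        obtain ⟨v1, k1⟩ := z1
        obtain ⟨v2, k2⟩ := z2
        rw [Finset.mem_coe, Finset.mem_sigma, Finset.mem_range] at h1 h2
        dsimp only at h1 h2 ⊢
        simp only [Prod.mk.injEq] at heq
        have hv : v1 = v2 := by
          rw [← List.take_append_drop k1 v1, ← List.take_append_drop k2 v2, heq.1, heq.2]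
        subst hv
        have hk : k1 = k2 := by
          have e1 : (v1.take k1).length = k1 := by rw [List.length_take]; omega
          have e2 : (v1.take k2).length = k2 := by rw [List.length_take]; omega
          rw [← e1, ← e2, heq.1]
        subst hk
        rfl
    _ ≤ ∑' z, F z := Summable.sum_le_tsum _ (fun z _ => hFnn z) hFsum


end H2

end ETA

/-- If `p ∈ A_h`, `q^∅ = 0` and `q` is dominated (coefficient-wise in
absolute value) by `a ⊗ exp^⧢(b)` or by `exp^⧢(b) ⊗ a` for linear combinations of single
letters `a, b`, then the resolvent `(∅-q)⁻¹` is well defined and lies in `A_h`, and the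
unique solution `ℓ = p ⊗ (∅-q)⁻¹` of `ℓ = p + ℓ ⊗ q` lies in `A_h`. -/
theorem solution_mem_Ah (d : ℕ) [NeZero d] (C T : ℝ) (hC : 2 ≤ C) (hT : 0 < T)
    (p q : ETA d)
    (hp : Summable (fun v : Word d => |p v| * hfun C T v))
    (hq0 : q [] = 0) (a b : Fin d → ℝ)
    (hdom :
      (∀ v : Word d, |q v| ≤ ETA.concat (ETA.letters a) (ETA.shuexp (ETA.letters b)) v) ∨
      (∀ v : Word d, |q v| ≤ ETA.concat (ETA.shuexp (ETA.letters b)) (ETA.letters a) v)) :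
    (∀ v : Word d, Summable (fun n : ℕ => |ETA.cpow q n v|)) ∧
    Summable (fun v : Word d => |ETA.res q v| * hfun C T v) ∧
    (ETA.concat p (ETA.res q)
      = p + ETA.concat (ETA.concat p (ETA.res q)) q) ∧
    Summable (fun v : Word d => |ETA.concat p (ETA.res q) v| * hfun C T v) := by
  classical
  set A := ∑ i : Fin d, |a i| with hAdef
  set B := ∑ i : Fin d, |b i| with hBdef
  set M := A + B + 1 with hMdef
  have hA0 : 0 ≤ A := Finset.sum_nonneg (fun i _ => abs_nonneg _)
  have hB0 : 0 ≤ B := Finset.sum_nonneg (fun i _ => abs_nonneg _)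
  have hM1 : 1 ≤ M := by rw [hMdef]; linarith
  have hq : ∀ v : Word d, |q v| ≤ M ^ v.length := ETA.q_bound a b q hq0 hdom
  have claim2 : Summable (fun v : Word d => |ETA.res q v| * hfun C T v) := by
    refine Summable.of_nonneg_of_le
      (fun v => mul_nonneg (abs_nonneg _) (le_of_lt (ETA.hfun_pos hC hT v)))
      (fun v => ?_) (ETA.summable_mul_hfun hC hT (2 * M) (by linarith))
    exact mul_le_mul_of_nonneg_right (ETA.abs_res_le hM1 hq0 hq v)
      (le_of_lt (ETA.hfun_pos hC hT v))
  refine ⟨fun v => ?_, claim2, ETA.main_identity p q hq0, ?_⟩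
  · refine summable_of_ne_finset_zero (s := Finset.range (v.length + 1)) fun n hn => ?_
    rw [Finset.mem_range] at hn
    rw [ETA.cpow_eq_zero hq0 n v (by omega), abs_zero]
  · exact ETA.summable_concat hC hT p (ETA.res q) hp claim2
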